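/- Let X_1, ..., X_n be i.i.d. nonnegative with distribution F, E[X_1] < ∞, and let M̂(u) = Σ_{i=1}^n (X_i - u)1_{X_i > u} / Σ_{i=1}^n 1_{X_i > u} be the empirical mean excess function and M(u) = E[X - u | X > u]. Then for any b with F(b) < 1, sup_{0 ≤ u ≤ b} |M̂(u) - M(u)| → 0 almost surely as n → ∞. -/

import Mathlib

open MeasureTheory ProbabilityTheory Real Set Filter Topology
open scoped Classical

/-- Quantile-type net for a probability measure supported on `[0, ∞)`. -/
lemma exists_net (ν : Measure ℝ) [IsProbabilityMeasure ν] (h0 : ν (Iio 0) = 0)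
    (b : ℝ) (k : ℕ) (hk : 1 ≤ k) :
    ∃ S : Finset ℝ, ∀ u ∈ Icc (0:ℝ) b, ∃ a ∈ S, ∃ c ∈ S,
      a ≤ u ∧ u < c ∧ (ν (Ioo a c)).toReal ≤ 1 / k := by
  set F : ℝ → ℝ := fun x => (ν (Iic x)).toReal with hF
  have hfin : ∀ s : Set ℝ, ν s ≠ ⊤ := fun s => measure_ne_top ν s
  have hFmono : Monotone F := fun x y hxy =>
    ENNReal.toReal_mono (hfin _) (measure_mono (Iic_subset_Iic.2 hxy))
  have hF01 : ∀ x, 0 ≤ F x := fun x => ENNReal.toReal_nonneg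
  -- the quantile points
  set T : ℕ → Set ℝ := fun j => {x | (j : ℝ) / k ≤ F x ∧ 0 ≤ x} with hT
  have hTbdd : ∀ j, BddBelow (T j) := fun j => ⟨0, fun x hx => hx.2⟩
  have hTne : ∀ j : ℕ, j ≤ k - 1 → (T j).Nonempty := by
    intro j hj
    have hjk : (j : ℝ) / k < 1 := by
      have hk' : (0:ℝ) < k := by positivity
      rw [div_lt_one hk']
      have hjk' : j < k := by omega
      exact_mod_cast hjk'
    have h1 : ENNReal.ofReal ((j:ℝ)/k) < 1 := by
      rw [← ENNReal.ofReal_one]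
      exact ENNReal.ofReal_lt_ofReal_iff_of_nonneg (by positivity) |>.2 hjk
    have h2 := tendsto_measure_Iic_atTop (μ := ν)
    rw [measure_univ] at h2
    have h3 : ∀ᶠ x : ℝ in atTop, ENNReal.ofReal ((j:ℝ)/k) < ν (Iic x) :=
      h2.eventually_const_lt h1
    obtain ⟨x, hx⟩ := (h3.and (eventually_ge_atTop (0:ℝ))).exists
    refine ⟨x, ?_, hx.2⟩
    have := (ENNReal.ofReal_le_iff_le_toReal (hfin _)).1 hx.1.le
    exact this
  set t : ℕ → ℝ := fun j => sInf (T j) with ht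
  have ht_mem_le : ∀ j, ∀ x ∈ T j, t j ≤ x := fun j x hx => csInf_le (hTbdd j) hx
  have ht0 : t 0 ≤ 0 := ht_mem_le 0 0 ⟨by simp [hF01 0], le_refl 0⟩
  -- F (t j) ≥ j / k  for j ≤ k - 1
  have hF_ge : ∀ j : ℕ, j ≤ k - 1 → ENNReal.ofReal ((j:ℝ)/k) ≤ ν (Iic (t j)) := by
    intro j hj
    have hIic : Iic (t j) = ⋂ n : ℕ, Iic (t j + 1 / (n + 1)) := by
      ext x
      simp only [mem_Iic, mem_iInter]
      constructor
      · intro h n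
        have hp : (0:ℝ) < 1 / (n+1) := by positivity
        linarith
      · intro h
        rw [le_iff_forall_pos_le_add]
        intro ε hε
        obtain ⟨n, hn⟩ := exists_nat_one_div_lt hε
        exact le_trans (h n) (by linarith)
    have hanti : Antitone fun n : ℕ => Iic (t j + 1 / (n + 1)) := by
      intro m n hmn
      apply Iic_subset_Iic.2
      have hc : (m:ℝ) ≤ n := Nat.cast_le.2 hmn
      have : (1:ℝ) / (n+1) ≤ 1 / (m+1) := by
        apply one_div_le_one_div_of_le (by positivity)
        linarith
      linarith
    have := tendsto_measure_iInter_atTop (μ := ν)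
      (fun n => (measurableSet_Iic).nullMeasurableSet) hanti ⟨0, hfin _⟩
    rw [← hIic] at this
    refine ge_of_tendsto this (Eventually.of_forall fun n => ?_)
    -- each F (t j + 1/(n+1)) ≥ j/k
    have hpos : (0:ℝ) < 1 / (n+1) := by positivity
    have : ∃ s ∈ T j, s < t j + 1 / (n+1) := by
      by_cases hjj : (T j).Nonempty
      · refine (csInf_lt_iff (hTbdd j) hjj).1 ?_
        have hteq : t j = sInf (T j) := rfl
        rw [← hteq]
        linarith
      · exact absurd (hTne j hj) hjj
    obtain ⟨s, hs, hslt⟩ := this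
    calc ENNReal.ofReal ((j:ℝ)/k) ≤ ν (Iic s) := by
          rw [ENNReal.ofReal_le_iff_le_toReal (hfin _)]; exact hs.1
      _ ≤ ν (Iic (t j + 1/(n+1))) := measure_mono (Iic_subset_Iic.2 hslt.le)
  -- ν (Iio (t j)) ≤ j / k
  have hF_lt : ∀ j : ℕ, ν (Iio (t j)) ≤ ENNReal.ofReal ((j:ℝ)/k) := by
    intro j
    have hIio : Iio (t j) = ⋃ n : ℕ, Iic (t j - 1 / (n + 1)) := by
      ext x
      simp only [mem_Iio, mem_iUnion, mem_Iic]
      constructor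
      · intro h
        obtain ⟨n, hn⟩ := exists_nat_one_div_lt (sub_pos.2 h)
        exact ⟨n, by linarith⟩
      · rintro ⟨n, hn⟩
        have : (0:ℝ) < 1 / (n+1) := by positivity
        linarith
    rw [hIio]
    rw [Directed.measure_iUnion]
    · apply iSup_le
      intro n
      -- t j - 1/(n+1) < t j so not in T j
      have hx : t j - 1/(n+1) < t j := by
        have : (0:ℝ) < 1 / (n+1) := by positivity
        linarith
      set x := t j - 1/(n+1)
      have hxnot : x ∉ T j := fun hmem => absurd (ht_mem_le j x hmem) (not_le.2 hx)
      by_cases hx0 : 0 ≤ x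
      · have : F x < (j:ℝ)/k := by
          by_contra hcon
          exact hxnot ⟨not_lt.1 hcon, hx0⟩
        rw [← ENNReal.ofReal_toReal (hfin (Iic x))]
        exact ENNReal.ofReal_le_ofReal this.le
      · have : Iic x ⊆ Iio 0 := fun y hy => lt_of_le_of_lt hy (not_le.1 hx0)
        calc ν (Iic x) ≤ ν (Iio 0) := measure_mono this
          _ = 0 := h0
          _ ≤ _ := zero_le
    · exact Monotone.directed_le (fun m n hmn => Iic_subset_Iic.2 (by
        have hc : (m:ℝ) ≤ n := Nat.cast_le.2 hmn
        have : (1:ℝ) / (n+1) ≤ 1 / (m+1) := by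
          apply one_div_le_one_div_of_le (by positivity)
          linarith
        linarith))
  -- the net
  refine ⟨(Finset.range k).image t ∪ {b + 1}, ?_⟩
  rintro u ⟨hu0, hub⟩
  have hP0 : t 0 ≤ u := le_trans ht0 hu0
  set j₀ := Nat.findGreatest (fun j => t j ≤ u) (k-1) with hj₀
  have hj₀le : j₀ ≤ k - 1 := Nat.findGreatest_le _
  have hj₀P : t j₀ ≤ u := Nat.findGreatest_spec (P := fun j => t j ≤ u) (n := k-1) (Nat.zero_le _) hP0
  have haS : t j₀ ∈ (Finset.range k).image t ∪ {b+1} := by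
    apply Finset.mem_union_left
    exact Finset.mem_image.2 ⟨j₀, Finset.mem_range.2 (by omega), rfl⟩
  have hkR : (0:ℝ) < k := by positivity
  have htoReal_ge : ∀ j : ℕ, j ≤ k - 1 → (j:ℝ)/k ≤ (ν (Iic (t j))).toReal := by
    intro j hj
    exact (ENNReal.ofReal_le_iff_le_toReal (hfin _)).1 (hF_ge j hj)
  by_cases hcase : j₀ + 1 ≤ k - 1
  · refine ⟨t j₀, haS, t (j₀+1), ?_, hj₀P, ?_, ?_⟩
    · apply Finset.mem_union_left
      exact Finset.mem_image.2 ⟨j₀+1, Finset.mem_range.2 (by omega), rfl⟩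
    · exact not_le.1 (Nat.findGreatest_is_greatest (P := fun j => t j ≤ u) (n := k-1) (by omega) hcase)
    · have huc : u < t (j₀+1) := not_le.1 (Nat.findGreatest_is_greatest (P := fun j => t j ≤ u) (n := k-1) (by omega) hcase)
      have hac : t j₀ < t (j₀+1) := lt_of_le_of_lt hj₀P huc
      have hsub : Iic (t j₀) ∪ Ioo (t j₀) (t (j₀+1)) ⊆ Iio (t (j₀+1)) := by
        rintro x (hx | hx)
        · exact lt_of_le_of_lt hx hac
        · exact hx.2
      have hdisj : Disjoint (Iic (t j₀)) (Ioo (t j₀) (t (j₀+1))) := by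
        apply Set.disjoint_left.2
        rintro x hx ⟨hx1, _⟩
        exact absurd hx (not_le.2 hx1)
      have hmu : ν (Iic (t j₀)) + ν (Ioo (t j₀) (t (j₀+1))) ≤ ν (Iio (t (j₀+1))) := by
        rw [← measure_union hdisj measurableSet_Ioo]
        exact measure_mono hsub
      have h1 : (ν (Iic (t j₀))).toReal + (ν (Ioo (t j₀) (t (j₀+1)))).toReal
          ≤ (ν (Iio (t (j₀+1)))).toReal := by
        rw [← ENNReal.toReal_add (hfin _) (hfin _)]
        exact ENNReal.toReal_mono (hfin _) hmu
      have h2 : (ν (Iio (t (j₀+1)))).toReal ≤ ((j₀:ℝ)+1)/k := by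
        have h := (ENNReal.le_ofReal_iff_toReal_le (hfin _)
          (by positivity : (0:ℝ) ≤ ((j₀+1 : ℕ):ℝ)/k)).1 (hF_lt (j₀+1))
        push_cast at h
        exact h
      have h3 := htoReal_ge j₀ hj₀le
      have h4 : ((j₀:ℝ)+1)/k = (j₀:ℝ)/k + 1/k := by ring
      linarith
  · have hj₀eq : j₀ = k - 1 := by omega
    refine ⟨t j₀, haS, b+1, ?_, hj₀P, by linarith, ?_⟩
    · exact Finset.mem_union_right _ (Finset.mem_singleton_self _)
    · have hsub : Ioo (t j₀) (b+1) ⊆ (Iic (t j₀))ᶜ := by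
        rintro x ⟨hx1, _⟩ hx2
        exact absurd hx2 (not_le.2 hx1)
      have hcompl : ν ((Iic (t j₀))ᶜ) = 1 - ν (Iic (t j₀)) := by
        rw [measure_compl measurableSet_Iic (hfin _), measure_univ]
      have h1 : (ν (Ioo (t j₀) (b+1))).toReal ≤ (1 - ν (Iic (t j₀))).toReal := by
        rw [← hcompl]
        exact ENNReal.toReal_mono (by rw [hcompl]; exact (tsub_le_self.trans_lt
          (by simp : (1:ENNReal) < ⊤)).ne) (measure_mono hsub)
      have h2 : (1 - ν (Iic (t j₀))).toReal = 1 - (ν (Iic (t j₀))).toReal := by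
        rw [ENNReal.toReal_sub_of_le prob_le_one (by simp)]
        simp
      have h3 := htoReal_ge j₀ hj₀le
      have hcast : ((j₀:ℝ)) = (k:ℝ) - 1 := by
        rw [hj₀eq]
        push_cast [Nat.cast_sub hk]
        ring
      have h5 : ((k:ℝ)-1)/k = 1 - 1/k := by field_simp
      rw [hcast, h5] at h3
      linarith


/-- Strong law of large numbers for a measurable function of iid variables. -/
lemma slln_comp {Ω : Type*} [MeasurableSpace Ω] {μ : Measure Ω} [IsProbabilityMeasure μ]
    (X : ℕ → Ω → ℝ) (hmeas : ∀ i, Measurable (X i))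
    (hindep : iIndepFun X μ)
    (hident : ∀ i, Measure.map (X i) μ = Measure.map (X 0) μ)
    (f : ℝ → ℝ) (hf : Measurable f) (hfi : Integrable (fun ω => f (X 0 ω)) μ) :
    ∀ᵐ ω ∂μ, Tendsto (fun n : ℕ => (∑ i ∈ Finset.range n, f (X i ω)) / n) atTop
      (𝓝 (∫ ω, f (X 0 ω) ∂μ)) := by
  have hid : ∀ i, IdentDistrib (X i) (X 0) μ μ := fun i =>
    ⟨(hmeas i).aemeasurable, (hmeas 0).aemeasurable, hident i⟩
  have h := ProbabilityTheory.strong_law_ae_real (fun i => f ∘ X i) hfi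
    (fun i j hij => (hindep.indepFun hij).comp hf hf)
    (fun i => (hid i).comp hf)
  exact h


set_option maxHeartbeats 2000000 in
/-- Yang: uniform strong consistency of the empirical mean
excess function: for i.i.d. nonnegative integrable `X_i` and `b` with
`F(b) < 1`, `sup_{0 ≤ u ≤ b} |M̂_n(u) - M(u)| → 0` almost surely. -/
theorem empirical_mean_excess_uniform_consistency
    {Ω : Type*} [MeasurableSpace Ω] (μ : Measure Ω) [IsProbabilityMeasure μ]
    (X : ℕ → Ω → ℝ) (hmeas : ∀ i, Measurable (X i))
    (hindep : iIndepFun X μ)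
    (hident : ∀ i, Measure.map (X i) μ = Measure.map (X 0) μ)
    (hnonneg : ∀ i ω, 0 ≤ X i ω)
    (hint : Integrable (X 0) μ)
    (b : ℝ) (hb : 0 < μ {ω | b < X 0 ω})  -- F(b) < 1
    (M : ℝ → ℝ)
    (hM : ∀ u, M u =
      (∫ ω in {ω | u < X 0 ω}, (X 0 ω - u) ∂μ) / (μ {ω | u < X 0 ω}).toReal)
    (Mhat : ℕ → ℝ → Ω → ℝ)
    (hMhat : ∀ n u ω, Mhat n u ω =
      (∑ i ∈ Finset.range n, if u < X i ω then X i ω - u else 0)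
        / (∑ i ∈ Finset.range n, if u < X i ω then (1 : ℝ) else 0)) :
    ∀ᵐ ω ∂μ,
      Tendsto (fun n : ℕ => sSup ((fun u => |Mhat n u ω - M u|) '' Icc 0 b))
        atTop (𝓝 0) := by
  by_cases hbneg : b < 0
  · refine Eventually.of_forall fun ω => ?_
    have he : Icc (0:ℝ) b = ∅ := Icc_eq_empty (by linarith)
    simp only [he, image_empty, Real.sSup_empty]
    exact tendsto_const_nhds
  push_neg at hbneg
  -- distribution of X 0
  set ν : Measure ℝ := Measure.map (X 0) μ with hν
  have hνprob : IsProbabilityMeasure ν := Measure.isProbabilityMeasure_map (hmeas 0).aemeasurable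
  have hfin : ∀ s : Set ℝ, ν s ≠ ⊤ := fun s => measure_ne_top ν s
  have hμfin : ∀ s : Set Ω, μ s ≠ ⊤ := fun s => measure_ne_top μ s
  have hpμ : ∀ u : ℝ, ν (Ioi u) = μ {ω | u < X 0 ω} := fun u => by
    rw [hν, Measure.map_apply (hmeas 0) measurableSet_Ioi]; rfl
  have hpbμ : ∀ u : ℝ, ν (Ici u) = μ {ω | u ≤ X 0 ω} := fun u => by
    rw [hν, Measure.map_apply (hmeas 0) measurableSet_Ici]; rfl
  set p : ℝ → ℝ := fun u => (ν (Ioi u)).toReal with hp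
  set pb : ℝ → ℝ := fun u => (ν (Ici u)).toReal with hpb
  set A : ℝ → ℝ := fun u => ∫ ω, max (X 0 ω - u) 0 ∂μ with hA
  set C : ℝ := ∫ ω, X 0 ω ∂μ with hC
  have hmes_lt : ∀ u : ℝ, MeasurableSet {ω | u < X 0 ω} :=
    fun u => measurableSet_lt measurable_const (hmeas 0)
  have hmes_le : ∀ u : ℝ, MeasurableSet {ω | u ≤ X 0 ω} :=
    fun u => measurableSet_le measurable_const (hmeas 0)
  -- integrability facts
  have int_max : ∀ u : ℝ, Integrable (fun ω => max (X 0 ω - u) 0) μ := by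
    intro u
    refine Integrable.mono' (g := fun ω => |X 0 ω| + |u|) (hint.abs.add (integrable_const |u|))
      (((hmeas 0).sub_const u).max measurable_const).aestronglyMeasurable
      (Eventually.of_forall fun ω => ?_)
    rw [Real.norm_eq_abs, abs_of_nonneg (le_max_right _ _)]
    have h1 : X 0 ω - u ≤ |X 0 ω| + |u| := by linarith [le_abs_self (X 0 ω), neg_abs_le u]
    have h2 : (0:ℝ) ≤ |X 0 ω| + |u| := by positivity
    exact max_le h1 h2
  have int_ind1 : ∀ s : ℝ, Integrable (fun ω => if s < X 0 ω then (1:ℝ) else 0) μ := by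
    intro s
    refine Integrable.mono' (integrable_const 1)
      (Measurable.aestronglyMeasurable ?_) (Eventually.of_forall fun ω => ?_)
    · exact Measurable.ite (hmes_lt s) measurable_const measurable_const
    · rw [Real.norm_eq_abs]
      split_ifs <;> simp
  have int_ind2 : ∀ s : ℝ, Integrable (fun ω => if s ≤ X 0 ω then (1:ℝ) else 0) μ := by
    intro s
    refine Integrable.mono' (integrable_const 1)
      (Measurable.aestronglyMeasurable ?_) (Eventually.of_forall fun ω => ?_)
    · exact Measurable.ite (hmes_le s) measurable_const measurable_const
    · rw [Real.norm_eq_abs]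
      split_ifs <;> simp
  -- integral identities
  have hind1 : ∀ s : ℝ, (∫ ω, (if s < X 0 ω then (1:ℝ) else 0) ∂μ) = p s := by
    intro s
    have h1 : (fun ω => if s < X 0 ω then (1:ℝ) else 0)
        = Set.indicator {ω | s < X 0 ω} (fun _ => (1:ℝ)) := by
      funext ω
      rw [Set.indicator_apply]
      by_cases h : s < X 0 ω <;> simp [h, Set.mem_setOf_eq]
    rw [h1, integral_indicator (hmes_lt s), setIntegral_const, smul_eq_mul, mul_one]
    show (μ {ω | s < X 0 ω}).toReal = (ν (Ioi s)).toReal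
    rw [hpμ]
  have hind2 : ∀ s : ℝ, (∫ ω, (if s ≤ X 0 ω then (1:ℝ) else 0) ∂μ) = pb s := by
    intro s
    have h1 : (fun ω => if s ≤ X 0 ω then (1:ℝ) else 0)
        = Set.indicator {ω | s ≤ X 0 ω} (fun _ => (1:ℝ)) := by
      funext ω
      rw [Set.indicator_apply]
      by_cases h : s ≤ X 0 ω <;> simp [h, Set.mem_setOf_eq]
    rw [h1, integral_indicator (hmes_le s), setIntegral_const, smul_eq_mul, mul_one]
    show (μ {ω | s ≤ X 0 ω}).toReal = (ν (Ici s)).toReal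
    rw [hpbμ]
  have hA_eq : ∀ u : ℝ, (∫ ω in {ω | u < X 0 ω}, (X 0 ω - u) ∂μ) = A u := by
    intro u
    rw [← integral_indicator (hmes_lt u)]
    congr 1
    funext ω
    rw [Set.indicator_apply]
    by_cases h : u < X 0 ω
    · simp only [Set.mem_setOf_eq, h, if_true]
      exact (max_eq_left (by linarith)).symm
    · simp only [Set.mem_setOf_eq, h, if_false]
      exact (max_eq_right (sub_nonpos.2 (not_lt.1 h))).symm
  have hMA : ∀ u : ℝ, M u = A u / p u := by
    intro u
    rw [hM u, hA_eq u]
    show A u / (μ {ω | u < X 0 ω}).toReal = A u / (ν (Ioi u)).toReal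
    rw [hpμ]
  -- properties of A, p
  have hAnonneg : ∀ u, 0 ≤ A u := fun u =>
    integral_nonneg fun ω => le_max_right _ _
  have hC0 : 0 ≤ C := integral_nonneg fun ω => hnonneg 0 ω
  have hAC : ∀ u : ℝ, 0 ≤ u → A u ≤ C := by
    intro u hu
    refine integral_mono (int_max u) hint fun ω => ?_
    exact max_le (by linarith [hnonneg 0 ω]) (hnonneg 0 ω)
  have hALip : ∀ u v : ℝ, |A u - A v| ≤ |u - v| := by
    intro u v
    rw [hA, ← integral_sub (int_max u) (int_max v)]
    calc |∫ ω, (max (X 0 ω - u) 0 - max (X 0 ω - v) 0) ∂μ|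
        ≤ ∫ ω, |max (X 0 ω - u) 0 - max (X 0 ω - v) 0| ∂μ := by
          simpa [Real.norm_eq_abs] using norm_integral_le_integral_norm
            (fun ω => max (X 0 ω - u) 0 - max (X 0 ω - v) 0) (μ := μ)
      _ ≤ ∫ (_ : Ω), |u - v| ∂μ := by
          refine integral_mono ((int_max u).sub (int_max v)).abs (integrable_const _)
            fun ω => ?_
          calc |max (X 0 ω - u) 0 - max (X 0 ω - v) 0| ≤ |(X 0 ω - u) - (X 0 ω - v)| :=
              abs_max_sub_max_le_abs _ _ _
            _ = |v - u| := by ring_nf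
            _ = |u - v| := abs_sub_comm _ _
      _ = |u - v| := by simp
  have hpmono : ∀ u v : ℝ, u ≤ v → p v ≤ p u := fun u v huv =>
    ENNReal.toReal_mono (hfin _) (measure_mono (Ioi_subset_Ioi huv))
  have hp_le_one : ∀ u, p u ≤ 1 := by
    intro u
    show (ν (Ioi u)).toReal ≤ 1
    exact ENNReal.toReal_le_of_le_ofReal one_pos.le (by simpa using prob_le_one)
  have hρpos : 0 < p b := by
    show 0 < (ν (Ioi b)).toReal
    rw [hpμ]
    exact ENNReal.toReal_pos hb.ne' (hμfin _)
  have h0ν : ν (Iio 0) = 0 := by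
    rw [hν, Measure.map_apply (hmeas 0) measurableSet_Iio]
    have : X 0 ⁻¹' Iio 0 = ∅ := by
      ext ω
      simp only [Set.mem_preimage, mem_Iio, Set.mem_empty_iff_false, iff_false, not_lt]
      exact hnonneg 0 ω
    rw [this, measure_empty]
  -- nets
  choose S hS using fun k : ℕ => exists_net ν h0ν b (k+1) (Nat.le_add_left 1 k)
  -- almost sure events
  have EA : ∀ᵐ ω ∂μ, ∀ q : ℚ, Tendsto
      (fun n : ℕ => (∑ i ∈ Finset.range n, max (X i ω - (q:ℝ)) 0) / n) atTop (𝓝 (A q)) := by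
    rw [ae_all_iff]
    intro q
    exact slln_comp X hmeas hindep hident (fun x => max (x - (q:ℝ)) 0)
      ((measurable_id.sub_const _).max measurable_const) (int_max q)
  have ED : ∀ᵐ ω ∂μ, ∀ k : ℕ, ∀ s ∈ S k,
      Tendsto (fun n : ℕ => (∑ i ∈ Finset.range n, if s < X i ω then (1:ℝ) else 0) / n)
        atTop (𝓝 (p s)) ∧
      Tendsto (fun n : ℕ => (∑ i ∈ Finset.range n, if s ≤ X i ω then (1:ℝ) else 0) / n)
        atTop (𝓝 (pb s)) := by
    rw [ae_all_iff]
    intro k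
    rw [eventually_all_finset]
    intro s _
    have h1 := slln_comp X hmeas hindep hident (fun x => if s < x then (1:ℝ) else 0)
      (Measurable.ite measurableSet_Ioi measurable_const measurable_const) (int_ind1 s)
    have h2 := slln_comp X hmeas hindep hident (fun x => if s ≤ x then (1:ℝ) else 0)
      (Measurable.ite measurableSet_Ici measurable_const measurable_const) (int_ind2 s)
    rw [hind1 s] at h1
    rw [hind2 s] at h2
    exact h1.and h2
  have EB : ∀ᵐ ω ∂μ, Tendsto
      (fun n : ℕ => (∑ i ∈ Finset.range n, if b < X i ω then (1:ℝ) else 0) / n)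
      atTop (𝓝 (p b)) := by
    have h1 := slln_comp X hmeas hindep hident (fun x => if b < x then (1:ℝ) else 0)
      (Measurable.ite measurableSet_Ioi measurable_const measurable_const) (int_ind1 b)
    rw [hind1 b] at h1
    exact h1
  filter_upwards [EA, ED, EB] with ω hEA hED hEB
  -- empirical (averaged) quantities
  set Nb : ℕ → ℝ → ℝ := fun n u => (∑ i ∈ Finset.range n, max (X i ω - u) 0) / n with hNb
  set Db : ℕ → ℝ → ℝ := fun n u => (∑ i ∈ Finset.range n, if u < X i ω then (1:ℝ) else 0) / n
    with hDb
  set Db2 : ℕ → ℝ → ℝ := fun n u => (∑ i ∈ Finset.range n, if u ≤ X i ω then (1:ℝ) else 0) / n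
    with hDb2
  -- Lipschitz bound for Nb
  have hNLip : ∀ (n : ℕ) (u v : ℝ), |Nb n u - Nb n v| ≤ |u - v| := by
    intro n u v
    show |(∑ i ∈ Finset.range n, max (X i ω - u) 0) / n
      - (∑ i ∈ Finset.range n, max (X i ω - v) 0) / n| ≤ |u - v|
    rcases Nat.eq_zero_or_pos n with hn | hn
    · simp [hn]
    have hn0 : (0:ℝ) < n := by exact_mod_cast hn
    rw [div_sub_div_same, abs_div, abs_of_pos hn0, div_le_iff₀ hn0, ← Finset.sum_sub_distrib]
    calc |∑ i ∈ Finset.range n, (max (X i ω - u) 0 - max (X i ω - v) 0)|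
        ≤ ∑ i ∈ Finset.range n, |max (X i ω - u) 0 - max (X i ω - v) 0| :=
          Finset.abs_sum_le_sum_abs _ _
      _ ≤ ∑ _i ∈ Finset.range n, |u - v| := by
          refine Finset.sum_le_sum fun i _ => ?_
          calc |max (X i ω - u) 0 - max (X i ω - v) 0| ≤ |(X i ω - u) - (X i ω - v)| :=
              abs_max_sub_max_le_abs _ _ _
            _ = |v - u| := by ring_nf
            _ = |u - v| := abs_sub_comm _ _
      _ = |u - v| * n := by rw [Finset.sum_const, Finset.card_range, nsmul_eq_mul, mul_comm]
  -- monotonicity of indicators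
  have hDmono : ∀ (n : ℕ) (u v : ℝ), u ≤ v → Db n v ≤ Db n u := by
    intro n u v huv
    show (∑ i ∈ Finset.range n, if v < X i ω then (1:ℝ) else 0) / n
      ≤ (∑ i ∈ Finset.range n, if u < X i ω then (1:ℝ) else 0) / n
    refine div_le_div_of_nonneg_right (Finset.sum_le_sum fun i _ => ?_) (Nat.cast_nonneg n)
    split_ifs with h1 h2
    · exact le_refl _
    · exact absurd (lt_of_le_of_lt huv h1) h2
    · norm_num
    · exact le_refl _
  have hD2le : ∀ (n : ℕ) (u c : ℝ), u < c → Db2 n c ≤ Db n u := by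
    intro n u c huc
    show (∑ i ∈ Finset.range n, if c ≤ X i ω then (1:ℝ) else 0) / n
      ≤ (∑ i ∈ Finset.range n, if u < X i ω then (1:ℝ) else 0) / n
    refine div_le_div_of_nonneg_right (Finset.sum_le_sum fun i _ => ?_) (Nat.cast_nonneg n)
    split_ifs with h1 h2
    · exact le_refl _
    · exact absurd (lt_of_lt_of_le huc h1) h2
    · norm_num
    · exact le_refl _
  -- Claim 1 : uniform convergence of Nb on [0, b]
  have key1 : ∀ ε : ℝ, 0 < ε → ∀ᶠ n : ℕ in atTop, ∀ u ∈ Icc (0:ℝ) b, |Nb n u - A u| ≤ ε := by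
    intro ε hε
    obtain ⟨δ, hδ0, hδε⟩ : ∃ δ : ℚ, 0 < (δ:ℝ) ∧ (δ:ℝ) < ε/3 := by
      obtain ⟨δ, h1, h2⟩ := exists_rat_btwn (show (0:ℝ) < ε/3 by linarith)
      exact ⟨δ, h1, h2⟩
    set m : ℕ := ⌈b / (δ:ℝ)⌉₊ + 1 with hm
    set G : Finset ℚ := (Finset.range m).image (fun i : ℕ => (i : ℚ) * δ) with hG
    have hgrid : ∀ u ∈ Icc (0:ℝ) b, ∃ q ∈ G, |u - (q:ℝ)| ≤ (δ:ℝ) := by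
      rintro u ⟨hu0, hub⟩
      set i : ℕ := ⌊u / (δ:ℝ)⌋₊ with hi
      have hi1 : (i:ℝ) * δ ≤ u := by
        rw [← le_div_iff₀ hδ0]
        exact Nat.floor_le (by positivity)
      have hi2 : u < ((i:ℝ) + 1) * δ := by
        rw [← div_lt_iff₀ hδ0]
        exact_mod_cast Nat.lt_floor_add_one (u / (δ:ℝ))
      have him : i < m := by
        have h2 : i ≤ ⌊b / (δ:ℝ)⌋₊ := Nat.floor_le_floor (by
          apply div_le_div_of_nonneg_right hub hδ0.le)
        have h3 : ⌊b / (δ:ℝ)⌋₊ ≤ ⌈b / (δ:ℝ)⌉₊ := Nat.floor_le_ceil _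
        omega
      refine ⟨(i:ℚ) * δ, Finset.mem_image.2 ⟨i, Finset.mem_range.2 him, rfl⟩, ?_⟩
      push_cast
      rw [abs_le]
      constructor
      · nlinarith
      · nlinarith
    have hev : ∀ᶠ n : ℕ in atTop, ∀ q ∈ G, |Nb n (q:ℝ) - A q| ≤ ε/3 := by
      rw [eventually_all_finset]
      intro q _
      have h := hEA q
      rw [Metric.tendsto_atTop] at h
      obtain ⟨N, hN⟩ := h (ε/3) (by linarith)
      refine eventually_atTop.2 ⟨N, fun n hn => ?_⟩
      have h2 := hN n hn
      rw [Real.dist_eq] at h2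
      exact le_of_lt h2
    filter_upwards [hev] with n hn u hu
    obtain ⟨q, hqG, hq⟩ := hgrid u hu
    have h1 := hNLip n u q
    have h2 := hALip (q:ℝ) u
    have h3 := hn q hqG
    have h4 : |A (q:ℝ) - A u| ≤ (δ:ℝ) := le_trans h2 (by rw [abs_sub_comm]; exact hq)
    have h5 : |Nb n u - Nb n q| ≤ (δ:ℝ) := le_trans h1 hq
    calc |Nb n u - A u| ≤ |Nb n u - A (q:ℝ)| + |A (q:ℝ) - A u| := abs_sub_le _ _ _
      _ ≤ (|Nb n u - Nb n (q:ℝ)| + |Nb n (q:ℝ) - A (q:ℝ)|) + |A (q:ℝ) - A u| := by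
          have := abs_sub_le (Nb n u) (Nb n (q:ℝ)) (A (q:ℝ))
          linarith
      _ ≤ ε := by linarith
  -- Claim 2 : uniform convergence of Db on [0, b]
  have key2 : ∀ ε : ℝ, 0 < ε → ∀ᶠ n : ℕ in atTop, ∀ u ∈ Icc (0:ℝ) b, |Db n u - p u| ≤ ε := by
    intro ε hε
    obtain ⟨k, hk⟩ := exists_nat_one_div_lt (show (0:ℝ) < ε/2 by linarith)
    have hnet := hS k
    have hev : ∀ᶠ n : ℕ in atTop, ∀ s ∈ S k,
        |Db n s - p s| ≤ ε/2 ∧ |Db2 n s - pb s| ≤ ε/2 := by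
      rw [eventually_all_finset]
      intro s hs
      obtain ⟨h1, h2⟩ := hED k s hs
      rw [Metric.tendsto_atTop] at h1 h2
      obtain ⟨N1, hN1⟩ := h1 (ε/2) (by linarith)
      obtain ⟨N2, hN2⟩ := h2 (ε/2) (by linarith)
      refine eventually_atTop.2 ⟨max N1 N2, fun n hn => ?_⟩
      have e1 := hN1 n (le_trans (le_max_left _ _) hn)
      have e2 := hN2 n (le_trans (le_max_right _ _) hn)
      rw [Real.dist_eq] at e1 e2
      exact ⟨le_of_lt e1, le_of_lt e2⟩
    filter_upwards [hev] with n hn u hu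
    obtain ⟨a, haS, c, hcS, hau, huc, hmass⟩ := hnet u hu
    obtain ⟨ha1, _⟩ := hn a haS
    obtain ⟨_, hc2⟩ := hn c hcS
    have hac : a < c := lt_of_le_of_lt hau huc
    have hsplit : p a - pb c = (ν (Ioo a c)).toReal := by
      have hdis : Disjoint (Ioo a c) (Ici c) := by
        rw [Set.disjoint_left]
        rintro x ⟨_, hx2⟩ hx3
        exact absurd hx3 (not_le.2 hx2)
      have hun : Ioo a c ∪ Ici c = Ioi a := Ioo_union_Ici_eq_Ioi hac
      have hm : ν (Ioi a) = ν (Ioo a c) + ν (Ici c) := by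
        rw [← hun, measure_union hdis measurableSet_Ici]
      show (ν (Ioi a)).toReal - (ν (Ici c)).toReal = _
      rw [hm, ENNReal.toReal_add (hfin _) (hfin _)]
      ring
    have hmass' : (ν (Ioo a c)).toReal ≤ 1/((k:ℝ)+1) := by
      have := hmass
      push_cast at this
      exact this
    have hpu1 : p u ≤ p a := hpmono a u hau
    have hpu2 : pb c ≤ p u := by
      show (ν (Ici c)).toReal ≤ (ν (Ioi u)).toReal
      exact ENNReal.toReal_mono (hfin _) (measure_mono fun x hx => lt_of_lt_of_le huc hx)
    have hDu1 : Db n u ≤ Db n a := hDmono n a u hau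
    have hDu2 : Db2 n c ≤ Db n u := hD2le n u c huc
    have ha1' := abs_le.1 ha1
    have hc2' := abs_le.1 hc2
    rw [abs_le]
    constructor
    · -- p u - Db n u bounded below
      have : p u - Db n u ≤ (p a - pb c) + (pb c - Db2 n c) := by linarith
      have h2 : p u - Db n u ≤ 1/((k:ℝ)+1) + ε/2 := by
        rw [hsplit] at this
        linarith
      linarith
    · have : Db n u - p u ≤ (Db n a - p a) + (p a - pb c) := by linarith
      have h2 : Db n u - p u ≤ ε/2 + 1/((k:ℝ)+1) := by
        rw [hsplit] at this
        linarith
      linarith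
  -- final assembly
  rw [Metric.tendsto_atTop]
  intro ε hε
  set ρ : ℝ := p b with hρ
  set ε₁ : ℝ := ε * ρ^2 / 16 with hε₁def
  set ε₂ : ℝ := min (ε * ρ^2 / (16 * (C+1))) (ρ/2) with hε₂def
  have hρ0 : 0 < ρ := hρpos
  have hε₁pos : 0 < ε₁ := by
    rw [hε₁def]
    positivity
  have hε₂pos : 0 < ε₂ := by
    rw [hε₂def]
    refine lt_min ?_ (by linarith)
    have hC1 : (0:ℝ) < C + 1 := by linarith
    positivity
  have hev := (key1 ε₁ hε₁pos).and ((key2 ε₂ hε₂pos).and (eventually_ge_atTop 1))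
  obtain ⟨N, hN⟩ := eventually_atTop.1 hev
  refine ⟨N, fun n hn => ?_⟩
  obtain ⟨hk1, hk2, hn1⟩ := hN n hn
  have hsup : ∀ x ∈ (fun u => |Mhat n u ω - M u|) '' Icc 0 b, x ≤ ε/2 := by
    rintro x ⟨u, ⟨hu0, hub⟩, rfl⟩
    show |Mhat n u ω - M u| ≤ ε / 2
    have hdbb : ρ/2 ≤ Db n b := by
      have h := abs_le.1 (hk2 b ⟨hbneg, le_refl b⟩)
      have hε₂' : ε₂ ≤ ρ/2 := min_le_right _ _
      linarith [h.1, h.2]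
    have hd : ρ/2 ≤ Db n u := le_trans hdbb (hDmono n u b hub)
    have hd0 : 0 < Db n u := lt_of_lt_of_le (by linarith) hd
    have hpu : ρ ≤ p u := hpmono u b hub
    have hpu0 : 0 < p u := lt_of_lt_of_le hρpos hpu
    have hMeq : Mhat n u ω = Nb n u / Db n u := by
      rw [hMhat n u ω]
      have hnum : (∑ i ∈ Finset.range n, if u < X i ω then X i ω - u else 0)
          = ∑ i ∈ Finset.range n, max (X i ω - u) 0 := by
        refine Finset.sum_congr rfl fun i _ => ?_
        by_cases h : u < X i ω
        · rw [if_pos h, max_eq_left (by linarith)]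
        · rw [if_neg h, max_eq_right (sub_nonpos.2 (not_lt.1 h))]
      rw [hnum]
      have hn0 : (n:ℝ) ≠ 0 := by
        have : (0:ℝ) < n := by exact_mod_cast hn1
        linarith
      show _ = ((∑ i ∈ Finset.range n, max (X i ω - u) 0) / n)
        / ((∑ i ∈ Finset.range n, if u < X i ω then (1:ℝ) else 0) / n)
      rw [div_div_div_comm, div_self hn0, div_one]
    have hNA : |Nb n u - A u| ≤ ε₁ := hk1 u ⟨hu0, hub⟩
    have hDp : |Db n u - p u| ≤ ε₂ := hk2 u ⟨hu0, hub⟩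
    have hAu : 0 ≤ A u := hAnonneg u
    have hAuC : A u ≤ C := hAC u hu0
    rw [hMeq, hMA u]
    have hiden : Nb n u / Db n u - A u / p u
        = ((Nb n u - A u) * p u + A u * (p u - Db n u)) / (Db n u * p u) := by
      field_simp
      ring
    rw [hiden, abs_div, abs_of_pos (mul_pos hd0 hpu0)]
    have hnum_le : |(Nb n u - A u) * p u + A u * (p u - Db n u)| ≤ ε₁ + C * ε₂ := by
      have h1 : |p u| ≤ 1 := by rw [abs_of_pos hpu0]; exact hp_le_one u
      have h3 : |p u - Db n u| ≤ ε₂ := by rw [abs_sub_comm]; exact hDp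
      calc |(Nb n u - A u) * p u + A u * (p u - Db n u)|
          ≤ |(Nb n u - A u) * p u| + |A u * (p u - Db n u)| := abs_add_le _ _
        _ = |Nb n u - A u| * |p u| + |A u| * |p u - Db n u| := by rw [abs_mul, abs_mul]
        _ ≤ ε₁ * 1 + C * ε₂ := by
            have e1 : |Nb n u - A u| * |p u| ≤ ε₁ * 1 :=
              mul_le_mul hNA h1 (abs_nonneg _) hε₁pos.le
            have e2 : |A u| * |p u - Db n u| ≤ C * ε₂ := by
              rw [abs_of_nonneg hAu]
              exact mul_le_mul hAuC h3 (abs_nonneg _) hC0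
            linarith
        _ = ε₁ + C * ε₂ := by ring
    have hden_ge : ρ * ρ / 2 ≤ Db n u * p u := by
      have hq : ρ / 2 * ρ ≤ Db n u * p u :=
        mul_le_mul hd hpu hρpos.le (le_trans (by linarith) hd)
      linarith
    calc |(Nb n u - A u) * p u + A u * (p u - Db n u)| / (Db n u * p u)
        ≤ (ε₁ + C * ε₂) / (ρ * ρ / 2) := by
          exact div_le_div₀ (add_nonneg hε₁pos.le (mul_nonneg hC0 hε₂pos.le)) hnum_le
            (div_pos (mul_pos hρpos hρpos) two_pos) hden_ge
      _ ≤ ε/2 := by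
          have hε₂le : ε₂ ≤ ε * ρ^2/(16*(C+1)) := min_le_left _ _
          have hC1 : (0:ℝ) < C + 1 := by linarith
          have e3 : C * ε₂ ≤ C * (ε * ρ^2/(16*(C+1))) :=
            mul_le_mul_of_nonneg_left hε₂le hC0
          have e4 : C * (ε * ρ^2/(16*(C+1))) ≤ ε * ρ^2/16 := by
            rw [mul_div_assoc', div_le_div_iff₀ (by positivity) (by norm_num : (0:ℝ) < 16)]
            nlinarith [mul_nonneg (mul_nonneg hε.le (sq_nonneg ρ)) hC0,
              mul_nonneg hε.le (sq_nonneg ρ)]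
          rw [div_le_iff₀ (div_pos (mul_pos hρ0 hρ0) two_pos), hε₁def]
          nlinarith [sq_nonneg ρ, mul_nonneg hε.le (sq_nonneg ρ)]
  have hs1 : sSup ((fun u => |Mhat n u ω - M u|) '' Icc 0 b) ≤ ε/2 :=
    Real.sSup_le hsup (by linarith)
  have hs0 : 0 ≤ sSup ((fun u => |Mhat n u ω - M u|) '' Icc 0 b) := by
    apply sSup_nonneg
    rintro x ⟨u, _, rfl⟩
    exact abs_nonneg _
  rw [Real.dist_eq, sub_zero, abs_of_nonneg hs0]
  linarith
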